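/- Let μ be a nonzero complex number with Re(μ) ≥ 0 and Im(μ) ≥ 0 satisfying |μ − √(2/3)| < √(8/3) (or μ = i√2), with μ < √(2/3) if Im(μ) = 0. Then the three-qubit reduced density matrix of the 4-qubit state ψ_μ, obtained by tracing out one qubit, has a partial transpose with respect to one of its qubits that is not positive semidefinite; in particular this reduced state is entangled, so ψ_μ is robust with respect to the loss of a single qubit. -/

import Mathlib

open scoped BigOperators ComplexConjugate ComplexOrder

noncomputable section

/-- A single-qubit unit vector in `ℂ²`. -/
def IsUnitQubit (e : Fin 2 → ℂ) : Prop := ∑ j, Complex.normSq (e j) = 1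

/-- Norm-one condition for a multiqubit vector on the register `ι`. -/
def IsUnitState {ι : Type*} [Fintype ι] [DecidableEq ι] (ψ : (ι → Fin 2) → ℂ) : Prop :=
  ∑ x, Complex.normSq (ψ x) = 1

/-- The product state `⊗ᵢ eᵢ`. -/
def prodState {ι : Type*} [Fintype ι] (e : ι → Fin 2 → ℂ) : (ι → Fin 2) → ℂ :=
  fun x => ∏ i, e i (x i)

/-- A pure state is a product state if it is a tensor product of single-qubit unit vectors. -/
def IsProductState {ι : Type*} [Fintype ι] (ψ : (ι → Fin 2) → ℂ) : Prop :=
  ∃ e : ι → Fin 2 → ℂ, (∀ i, IsUnitQubit (e i)) ∧ ψ = prodState e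

/-- A pure state is entangled if it is not a product state. -/
def IsEntangledState {ι : Type*} [Fintype ι] (ψ : (ι → Fin 2) → ℂ) : Prop :=
  ¬ IsProductState ψ

/-- The projector `|v⟩⟨v|` as a matrix. -/
def proj {α : Type*} (v : α → ℂ) : Matrix α α ℂ :=
  Matrix.of fun x y => v x * conj (v y)

/-- A density matrix on the qubit register `ι` is separable if it is a finite convex
combination of projectors onto product states (and entangled otherwise). -/
def IsSeparableDensity {ι : Type*} [Fintype ι] (ρ : Matrix (ι → Fin 2) (ι → Fin 2) ℂ) : Prop :=
  ∃ (n : ℕ) (w : Fin n → ℝ) (e : Fin n → ι → Fin 2 → ℂ),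
    (∀ m, 0 ≤ w m) ∧ (∑ m, w m = 1) ∧ (∀ m i, IsUnitQubit (e m i)) ∧
    ρ = ∑ m, (w m : ℂ) • proj (prodState (e m))

/-- Assemble a full assignment of the `N` qubits from an assignment `x` of the qubits outside
`S` and an assignment `z` of the qubits in `S`. -/
def mergeCompl {N : ℕ} (S : Finset (Fin N)) (x : {i : Fin N // i ∉ S} → Fin 2)
    (z : {i : Fin N // i ∈ S} → Fin 2) : Fin N → Fin 2 :=
  fun i => if h : i ∈ S then z ⟨i, h⟩ else x ⟨i, h⟩

/-- The reduced density operator `ρ_{¬S}(ψ)`: the partial trace of `|ψ⟩⟨ψ|` over the qubits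
in `S`. -/
def reducedState {N : ℕ} (ψ : (Fin N → Fin 2) → ℂ) (S : Finset (Fin N)) :
    Matrix ({i : Fin N // i ∉ S} → Fin 2) ({i : Fin N // i ∉ S} → Fin 2) ℂ :=
  Matrix.of fun x y => ∑ z : {i : Fin N // i ∈ S} → Fin 2,
    ψ (mergeCompl S x z) * conj (ψ (mergeCompl S y z))

/-- The `k`-excitation Dicke state `|D_4^{(k)}⟩` of 4 qubits. -/
def dicke4 (k : ℕ) : (Fin 4 → Fin 2) → ℂ :=
  fun x => if (∑ i, ((x i : ℕ))) = k then ((1 / Real.sqrt ((4 : ℕ).choose k) : ℝ) : ℂ) else 0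

/-- The 4-qubit state `ψ_μ = (|D_4^{(0)}⟩ + μ |D_4^{(2)}⟩ + |D_4^{(4)}⟩)/√(2 + |μ|²)`. -/
def psiMu (μ : ℂ) : (Fin 4 → Fin 2) → ℂ :=
  fun x => (dicke4 0 x + μ * dicke4 2 x + dicke4 4 x)
    / ((Real.sqrt (2 + Complex.normSq μ) : ℝ) : ℂ)

/-- Reassemble a full assignment of the 4 qubits from an assignment `x` of the qubits other
than `q` and a value `z` for qubit `q`. -/
def extendOne (q : Fin 4) (x : {i : Fin 4 // i ≠ q} → Fin 2) (z : Fin 2) : Fin 4 → Fin 2 :=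
  fun i => if h : i = q then z else x ⟨i, h⟩

/-- The three-qubit reduced density matrix of a 4-qubit state `ψ` obtained by tracing out
qubit `q`. -/
def rhoTriple (ψ : (Fin 4 → Fin 2) → ℂ) (q : Fin 4) :
    Matrix ({i : Fin 4 // i ≠ q} → Fin 2) ({i : Fin 4 // i ≠ q} → Fin 2) ℂ :=
  Matrix.of fun x y => ∑ z : Fin 2, ψ (extendOne q x z) * conj (ψ (extendOne q y z))

/-- The partial transpose of a multiqubit density matrix with respect to the qubit `r`. -/
def ptransposeAt {ι : Type*} [Fintype ι] [DecidableEq ι]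
    (ρ : Matrix (ι → Fin 2) (ι → Fin 2) ℂ) (r : ι) :
    Matrix (ι → Fin 2) (ι → Fin 2) ℂ :=
  Matrix.of fun x y => ρ (Function.update x r (y r)) (Function.update y r (x r))


open Matrix in
lemma proj_posSemidef {α : Type*} [Fintype α] [DecidableEq α] (v : α → ℂ) :
    (proj v).PosSemidef := by
  rw [Matrix.posSemidef_iff_dotProduct_mulVec]
  constructor
  · ext x y
    simp [proj, Matrix.conjTranspose_apply, mul_comm]
  · intro x
    have h1 : star x ⬝ᵥ (proj v *ᵥ x) =
        star (∑ j, conj (v j) * x j) * (∑ j, conj (v j) * x j) := by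
      simp only [dotProduct, Matrix.mulVec, proj, Matrix.of_apply, Pi.star_apply,
        star_sum, star_mul', Finset.sum_mul, Finset.mul_sum]
      rw [Finset.sum_comm]
      refine Finset.sum_congr rfl fun i _ => Finset.sum_congr rfl fun j _ => ?_
      simp [Complex.star_def]
      ring
    rw [h1]
    exact star_mul_self_nonneg _

lemma posSemidef_real_smul {α : Type*} [Fintype α] [DecidableEq α]
    {M : Matrix α α ℂ} (hM : M.PosSemidef) {w : ℝ} (hw : 0 ≤ w) :
    ((w : ℂ) • M).PosSemidef := by
  rw [Matrix.posSemidef_iff_dotProduct_mulVec]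
  constructor
  · have hsw : star (w : ℂ) = (w : ℂ) := by simp [Complex.star_def, Complex.conj_ofReal]
    unfold Matrix.IsHermitian
    rw [Matrix.conjTranspose_smul, hM.1, hsw]
  · intro x
    rw [Matrix.smul_mulVec, dotProduct_smul, smul_eq_mul]
    exact mul_nonneg (Complex.zero_le_real.2 hw) (hM.dotProduct_mulVec_nonneg x)

lemma ptransposeAt_proj_prodState {ι : Type*} [Fintype ι] [DecidableEq ι]
    (e : ι → Fin 2 → ℂ) (r : ι) :
    ptransposeAt (proj (prodState e)) r
      = proj (prodState (Function.update e r (star (e r)))) := by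
  ext x y
  simp only [ptransposeAt, proj, prodState, Matrix.of_apply]
  have hP : ∀ (f : ι → Fin 2) (w : Fin 2),
      (∏ i, e i (Function.update f r w i)) = e r w * ∏ i ∈ Finset.univ.erase r, e i (f i) := by
    intro f w
    rw [← Finset.mul_prod_erase Finset.univ _ (Finset.mem_univ r), Function.update_self]
    congr 1
    refine Finset.prod_congr rfl fun i hi => ?_
    rw [Function.update_of_ne (Finset.ne_of_mem_erase hi)]
  have hQ : ∀ f : ι → Fin 2,
      (∏ i, Function.update e r (star (e r)) i (f i))
        = conj (e r (f r)) * ∏ i ∈ Finset.univ.erase r, e i (f i) := by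
    intro f
    rw [← Finset.mul_prod_erase Finset.univ _ (Finset.mem_univ r), Function.update_self]
    simp only [Pi.star_apply, Complex.star_def]
    congr 1
    refine Finset.prod_congr rfl fun i hi => ?_
    rw [Function.update_of_ne (Finset.ne_of_mem_erase hi)]
  rw [hP, hP, hQ, hQ, _root_.map_mul, _root_.map_mul]
  simp only [Complex.conj_conj]
  ring

open Matrix in
lemma isSeparable_ptranspose_posSemidef {ι : Type*} [Fintype ι] [DecidableEq ι]
    {ρ : Matrix (ι → Fin 2) (ι → Fin 2) ℂ} (h : IsSeparableDensity ρ) (r : ι) :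
    (ptransposeAt ρ r).PosSemidef := by
  obtain ⟨k, w, e, hw, -, -, rfl⟩ := h
  have hlin : ptransposeAt (∑ m, (w m : ℂ) • proj (prodState (e m))) r
      = ∑ m, (w m : ℂ) • ptransposeAt (proj (prodState (e m))) r := by
    ext x y
    simp [ptransposeAt, Matrix.sum_apply, Matrix.smul_apply]
  rw [hlin]
  refine Finset.sum_induction _ Matrix.PosSemidef (fun a b ha hb => ha.add hb)
    Matrix.PosSemidef.zero (fun m _ => ?_)
  rw [ptransposeAt_proj_prodState]
  exact posSemidef_real_smul (proj_posSemidef _) (hw m)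


open Matrix in
set_option maxHeartbeats 1000000 in
lemma key_nppt (μ : ℂ) (hμ : μ ≠ 0) (h6 : Complex.normSq μ < 6) (q : Fin 4)
    (r s t : {i : Fin 4 // i ≠ q}) (hrs : r ≠ s) (hrt : r ≠ t) (hst : s ≠ t) :
    ¬ (ptransposeAt (rhoTriple (psiMu μ) q) r).PosSemidef := by
  intro hPSD
  set n := Complex.normSq μ with hn
  have hn0 : 0 < n := Complex.normSq_pos.2 hμ
  have hN : (0:ℝ) < 2 + n := by linarith
  -- the subtype has exactly the three elements r, s, t
  have hcard : Fintype.card {i : Fin 4 // i ≠ q} = 3 := by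
    simp [Fintype.card_subtype_compl, Fintype.card_subtype_eq]
  have huniv : (Finset.univ : Finset {i : Fin 4 // i ≠ q}) = {r, s, t} := by
    symm
    apply Finset.eq_of_subset_of_card_le (Finset.subset_univ _)
    rw [Finset.card_univ, hcard,
      Finset.card_insert_of_notMem (by simp [hrs, hrt]),
      Finset.card_insert_of_notMem (by simp [hst]), Finset.card_singleton]
  -- weight of extended assignments
  have hw : ∀ (F : {i : Fin 4 // i ≠ q} → Fin 2) (z : Fin 2),
      (∑ i : Fin 4, ((extendOne q F z i : ℕ)))
        = (z : ℕ) + (((F r : ℕ)) + ((F s : ℕ) + (F t : ℕ))) := by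
    intro F z
    rw [← Finset.add_sum_erase Finset.univ _ (Finset.mem_univ q)]
    congr 1
    · show ((extendOne q F z q : ℕ)) = (z : ℕ)
      rw [extendOne, dif_pos rfl]
    · rw [Finset.sum_subtype (p := fun i => i ≠ q) (Finset.univ.erase q) (by simp)
        (fun i => ((extendOne q F z i : ℕ)))]
      have he : ∀ i : {i : Fin 4 // i ≠ q}, ((extendOne q F z i : ℕ)) = ((F i : ℕ)) := by
        intro i
        rw [extendOne, dif_neg i.2]
      simp only [he]
      rw [huniv, Finset.sum_insert (by simp [hrs, hrt]),
        Finset.sum_insert (by simp [hst]), Finset.sum_singleton]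
  set u : ℂ := ((Real.sqrt 6 : ℝ) : ℂ) with hu_def
  set v : ℂ := ((Real.sqrt (2 + n) : ℝ) : ℂ) with hv_def
  have hu0 : u ≠ 0 := Complex.ofReal_ne_zero.mpr (by positivity)
  have hv0 : v ≠ 0 := Complex.ofReal_ne_zero.mpr (by positivity)
  have huu : u * u = 6 := by
    rw [hu_def, ← Complex.ofReal_mul, Real.mul_self_sqrt (by norm_num)]
    norm_num
  have hvv : v * v = 2 + ((n : ℝ) : ℂ) := by
    rw [hv_def, ← Complex.ofReal_mul, Real.mul_self_sqrt (le_of_lt hN)]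
    push_cast
    ring
  have hμc : μ * conj μ = ((n : ℝ) : ℂ) := Complex.mul_conj μ
  -- evaluation of psiMu on extended assignments, by weight
  have hψ2 : ∀ (F : {i : Fin 4 // i ≠ q} → Fin 2) (z : Fin 2),
      ((z : ℕ) + (((F r : ℕ)) + ((F s : ℕ) + (F t : ℕ)))) = 2 →
      psiMu μ (extendOne q F z) = μ / (u * v) := by
    intro F z h
    have hch : ((4:ℕ).choose 2) = 6 := by decide
    have h60 : Real.sqrt 6 ≠ 0 := by positivity
    have hN0 : Real.sqrt (2 + n) ≠ 0 := by positivity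
    unfold psiMu dicke4
    rw [hw F z, h, ← hn, hch, hu_def, hv_def]
    norm_num
    push_cast
    field_simp
  have hψ4 : ∀ (F : {i : Fin 4 // i ≠ q} → Fin 2) (z : Fin 2),
      ((z : ℕ) + (((F r : ℕ)) + ((F s : ℕ) + (F t : ℕ)))) = 4 →
      psiMu μ (extendOne q F z) = 1 / v := by
    intro F z h
    unfold psiMu dicke4
    rw [hw F z, h, ← hn, ← hv_def]
    norm_num
  have hψ1 : ∀ (F : {i : Fin 4 // i ≠ q} → Fin 2) (z : Fin 2),
      ((z : ℕ) + (((F r : ℕ)) + ((F s : ℕ) + (F t : ℕ)))) = 1 →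
      psiMu μ (extendOne q F z) = 0 := by
    intro F z h
    unfold psiMu dicke4
    rw [hw F z, h]
    norm_num
  have hψ3 : ∀ (F : {i : Fin 4 // i ≠ q} → Fin 2) (z : Fin 2),
      ((z : ℕ) + (((F r : ℕ)) + ((F s : ℕ) + (F t : ℕ)))) = 3 →
      psiMu μ (extendOne q F z) = 0 := by
    intro F z h
    unfold psiMu dicke4
    rw [hw F z, h]
    norm_num
  have hsr : s ≠ r := hrs.symm
  have htr : t ≠ r := hrt.symm
  have hts : t ≠ s := hst.symm
  -- the three special vectors
  set f1 : {i : Fin 4 // i ≠ q} → Fin 2 := fun i => if i = r ∨ i = s then 1 else 0 with hf1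
  set f2 : {i : Fin 4 // i ≠ q} → Fin 2 := fun i => if i = r ∨ i = t then 1 else 0 with hf2
  set f3 : {i : Fin 4 // i ≠ q} → Fin 2 := fun i => if i = s ∨ i = t then 1 else 0 with hf3
  set g1 : {i : Fin 4 // i ≠ q} → Fin 2 := fun i => if i = s then 1 else 0 with hg1
  set g2 : {i : Fin 4 // i ≠ q} → Fin 2 := fun i => if i = t then 1 else 0 with hg2
  set g3 : {i : Fin 4 // i ≠ q} → Fin 2 := fun _ => 1 with hg3
  have hall : ∀ i : {i : Fin 4 // i ≠ q}, i = r ∨ i = s ∨ i = t := by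
    intro i
    have hm : i ∈ (Finset.univ : Finset {i : Fin 4 // i ≠ q}) := Finset.mem_univ i
    rw [huniv] at hm
    simpa using hm
  -- update computations
  have hu11 : Function.update f1 r (f1 r) = f1 := Function.update_eq_self _ _
  have hu22 : Function.update f2 r (f2 r) = f2 := Function.update_eq_self _ _
  have hu33 : Function.update f3 r (f3 r) = f3 := Function.update_eq_self _ _
  have hf2rf1r : f2 r = f1 r := by simp [hf1, hf2]
  have hu12 : Function.update f1 r (f2 r) = f1 := by rw [hf2rf1r]; exact Function.update_eq_self _ _
  have hu21 : Function.update f2 r (f1 r) = f2 := by rw [← hf2rf1r]; exact Function.update_eq_self _ _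
  have hu13 : Function.update f1 r (f3 r) = g1 := by
    funext i
    rw [Function.update_apply]
    by_cases hir : i = r
    · subst hir
      simp [hf1, hf3, hg1, hrs, hrt, hsr]
    · simp [hf1, hg1, hir]
  have hu23 : Function.update f2 r (f3 r) = g2 := by
    funext i
    rw [Function.update_apply]
    by_cases hir : i = r
    · subst hir
      simp [hf2, hf3, hg2, hrs, hrt, htr]
    · simp [hf2, hg2, hir]
  have hu31 : Function.update f3 r (f1 r) = g3 := by
    funext i
    rw [Function.update_apply]
    rcases hall i with h | h | h <;> subst h
    · simp [hf1, hg3]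
    · simp [hf3, hg3, hsr]
    · simp [hf3, hg3, htr]
  have hu32 : Function.update f3 r (f2 r) = g3 := by
    funext i
    rw [Function.update_apply]
    rcases hall i with h | h | h <;> subst h
    · simp [hf2, hg3]
    · simp [hf3, hg3, hsr]
    · simp [hf3, hg3, htr]
  -- weights
  have hwf1 : ∀ z : Fin 2, ((z : ℕ) + (((f1 r : ℕ)) + ((f1 s : ℕ) + (f1 t : ℕ)))) = (z : ℕ) + 2 := by
    intro z
    simp [hf1, htr, hts]
  have hwf2 : ∀ z : Fin 2, ((z : ℕ) + (((f2 r : ℕ)) + ((f2 s : ℕ) + (f2 t : ℕ)))) = (z : ℕ) + 2 := by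
    intro z
    simp [hf2, hsr, hst]
  have hwf3 : ∀ z : Fin 2, ((z : ℕ) + (((f3 r : ℕ)) + ((f3 s : ℕ) + (f3 t : ℕ)))) = (z : ℕ) + 2 := by
    intro z
    simp [hf3, hrs, hrt]
  have hwg1 : ∀ z : Fin 2, ((z : ℕ) + (((g1 r : ℕ)) + ((g1 s : ℕ) + (g1 t : ℕ)))) = (z : ℕ) + 1 := by
    intro z
    simp [hg1, hrs, hts]
  have hwg2 : ∀ z : Fin 2, ((z : ℕ) + (((g2 r : ℕ)) + ((g2 s : ℕ) + (g2 t : ℕ)))) = (z : ℕ) + 1 := by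
    intro z
    simp [hg2, hrt, hst]
  have hwg3 : ∀ z : Fin 2, ((z : ℕ) + (((g3 r : ℕ)) + ((g3 s : ℕ) + (g3 t : ℕ)))) = (z : ℕ) + 3 := by
    intro z
    simp [hg3]
  -- entry formula
  have hM : ∀ f g : {i : Fin 4 // i ≠ q} → Fin 2,
      ptransposeAt (rhoTriple (psiMu μ) q) r f g
        = ∑ z : Fin 2, psiMu μ (extendOne q (Function.update f r (g r)) z)
            * conj (psiMu μ (extendOne q (Function.update g r (f r)) z)) := fun f g => rfl
  -- the nine entries
  have hM11 : ptransposeAt (rhoTriple (psiMu μ) q) r f1 f1 = (μ / (u * v)) * conj (μ / (u * v)) := by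
    rw [hM, hu11, Fin.sum_univ_two, hψ2 f1 0 (hwf1 0), hψ3 f1 1 (hwf1 1)]
    simp
  have hM12 : ptransposeAt (rhoTriple (psiMu μ) q) r f1 f2 = (μ / (u * v)) * conj (μ / (u * v)) := by
    rw [hM, hu12, hu21, Fin.sum_univ_two, hψ2 f1 0 (hwf1 0), hψ3 f1 1 (hwf1 1),
      hψ2 f2 0 (hwf2 0), hψ3 f2 1 (hwf2 1)]
    simp
  have hM21 : ptransposeAt (rhoTriple (psiMu μ) q) r f2 f1 = (μ / (u * v)) * conj (μ / (u * v)) := by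
    rw [hM, hu12, hu21, Fin.sum_univ_two, hψ2 f1 0 (hwf1 0), hψ3 f1 1 (hwf1 1),
      hψ2 f2 0 (hwf2 0), hψ3 f2 1 (hwf2 1)]
    simp
  have hM22 : ptransposeAt (rhoTriple (psiMu μ) q) r f2 f2 = (μ / (u * v)) * conj (μ / (u * v)) := by
    rw [hM, hu22, Fin.sum_univ_two, hψ2 f2 0 (hwf2 0), hψ3 f2 1 (hwf2 1)]
    simp
  have hM33 : ptransposeAt (rhoTriple (psiMu μ) q) r f3 f3 = (μ / (u * v)) * conj (μ / (u * v)) := by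
    rw [hM, hu33, Fin.sum_univ_two, hψ2 f3 0 (hwf3 0), hψ3 f3 1 (hwf3 1)]
    simp
  have hM13 : ptransposeAt (rhoTriple (psiMu μ) q) r f1 f3 = (μ / (u * v)) * conj (1 / v) := by
    rw [hM, hu13, hu31, Fin.sum_univ_two, hψ1 g1 0 (hwg1 0), hψ2 g1 1 (hwg1 1),
      hψ3 g3 0 (hwg3 0), hψ4 g3 1 (hwg3 1)]
    simp
  have hM23 : ptransposeAt (rhoTriple (psiMu μ) q) r f2 f3 = (μ / (u * v)) * conj (1 / v) := by
    rw [hM, hu23, hu32, Fin.sum_univ_two, hψ1 g2 0 (hwg2 0), hψ2 g2 1 (hwg2 1),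
      hψ3 g3 0 (hwg3 0), hψ4 g3 1 (hwg3 1)]
    simp
  have hM31 : ptransposeAt (rhoTriple (psiMu μ) q) r f3 f1 = (1 / v) * conj (μ / (u * v)) := by
    rw [hM, hu13, hu31, Fin.sum_univ_two, hψ1 g1 0 (hwg1 0), hψ2 g1 1 (hwg1 1),
      hψ3 g3 0 (hwg3 0), hψ4 g3 1 (hwg3 1)]
    simp
  have hM32 : ptransposeAt (rhoTriple (psiMu μ) q) r f3 f2 = (1 / v) * conj (μ / (u * v)) := by
    rw [hM, hu23, hu32, Fin.sum_univ_two, hψ1 g2 0 (hwg2 0), hψ2 g2 1 (hwg2 1),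
      hψ3 g3 0 (hwg3 0), hψ4 g3 1 (hwg3 1)]
    simp
  -- witness vector
  set c3 : ℂ := -(u * ((n : ℝ) : ℂ)) with hc3
  set xv : ({i : Fin 4 // i ≠ q} → Fin 2) → ℂ := fun f =>
      3 * μ * (if f = f1 then 1 else 0) + 3 * μ * (if f = f2 then 1 else 0)
        + c3 * (if f = f3 then 1 else 0) with hxv
  have star_ite : ∀ (P : Prop) [Decidable P] (a b : ℂ),
      star (if P then a else b) = if P then star a else star b := by
    intro P inst a b
    split <;> rfl
  have hstarx : star xv = fun f =>
      conj (3 * μ) * (if f = f1 then 1 else 0) + conj (3 * μ) * (if f = f2 then 1 else 0)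
        + conj c3 * (if f = f3 then 1 else 0) := by
    funext f
    simp only [Pi.star_apply, hxv, star_add, star_mul', star_ite, star_one, star_zero,
      Complex.star_def, mul_comm, _root_.map_mul, Complex.conj_ofNat]
  have hconj3μ : conj (3 * μ) = 3 * conj μ := by rw [_root_.map_mul, Complex.conj_ofNat]
  have hconjc3 : conj c3 = c3 := by
    simp [hc3, hu_def, Complex.conj_ofReal]
  have hconjb : conj (μ / (u * v)) = conj μ / (u * v) := by
    simp [hu_def, hv_def, map_div₀, _root_.map_mul, Complex.conj_ofReal]
  have hconj1v : conj (1 / v) = 1 / v := by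
    simp [hv_def, map_div₀, Complex.conj_ofReal]
  set Pm := ptransposeAt (rhoTriple (psiMu μ) q) r with hPm
  have hexp : star xv ⬝ᵥ Pm *ᵥ xv
      = conj (3*μ) * (Pm f1 f1 * (3*μ)) + conj (3*μ) * (Pm f1 f2 * (3*μ))
        + conj (3*μ) * (Pm f1 f3 * c3)
        + conj (3*μ) * (Pm f2 f1 * (3*μ)) + conj (3*μ) * (Pm f2 f2 * (3*μ))
        + conj (3*μ) * (Pm f2 f3 * c3)
        + conj c3 * (Pm f3 f1 * (3*μ)) + conj c3 * (Pm f3 f2 * (3*μ))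
        + conj c3 * (Pm f3 f3 * c3) := by
    rw [hstarx]
    simp only [hxv, dotProduct, Matrix.mulVec, mul_ite, ite_mul, mul_add, add_mul,
      mul_zero, zero_mul, mul_one, one_mul, Finset.sum_add_distrib, Finset.sum_ite_eq',
      Finset.mem_univ, if_true]
    ring
  have hval : star xv ⬝ᵥ Pm *ᵥ xv = (((n^2 * (n - 6) / (2 + n)) : ℝ) : ℂ) := by
    rw [hexp, hM11, hM12, hM21, hM22, hM13, hM23, hM31, hM32, hM33]
    simp only [hconj3μ, hconjc3, hconjb, hconj1v, hc3]
    have hrhs : (((n^2 * (n - 6) / (2 + n)) : ℝ) : ℂ)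
        = (((n:ℝ):ℂ)^2 * (((n:ℝ):ℂ) - 6)) / (v * v) := by
      rw [hvv]
      push_cast
      ring
    have hconjc3' : conj (-(u * ((n:ℝ):ℂ))) = -(u * ((n:ℝ):ℂ)) := hconjc3
    simp only [hconjc3']
    rw [hrhs]
    field_simp
    linear_combination ((-6) * ((n:ℝ):ℂ)^2) * huu
      + (36 * (μ * conj μ + ((n:ℝ):ℂ)) - 12 * (u*u) * ((n:ℝ):ℂ) + u*u*((n:ℝ):ℂ)^2) * hμc
  have hQ0 := hPSD.dotProduct_mulVec_nonneg xv
  rw [hval] at hQ0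
  rw [Complex.zero_le_real] at hQ0
  have : n^2 * (n - 6) / (2 + n) < 0 := div_neg_of_neg_of_pos (mul_neg_of_pos_of_neg (pow_pos hn0 2) (by linarith)) hN
  linarith

/-- For every nonzero `μ` in the fundamental domain `S` of the
`D_{1,1,1,1}` family (`Re μ ≥ 0`, `Im μ ≥ 0`, `|μ − √(2/3)| < √(8/3)` or `μ = i√2`, and
`μ < √(2/3)` when `μ` is real), the three-qubit reduced density matrix of `ψ_μ` obtained by
tracing out any one qubit has a partial transpose with respect to one of its qubits that is
not positive semidefinite; in particular this reduced state is entangled, so `ψ_μ` is robust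
with respect to the loss of a single qubit. -/
theorem psiMu_three_qubit_nppt (μ : ℂ) (hμ : μ ≠ 0)
    (hre : 0 ≤ μ.re) (him : 0 ≤ μ.im)
    (hdom : ‖μ - (Real.sqrt (2 / 3) : ℝ)‖ < Real.sqrt (8 / 3)
      ∨ μ = Complex.I * (Real.sqrt 2 : ℝ))
    (hreal : μ.im = 0 → μ.re < Real.sqrt (2 / 3)) :
    ∀ q : Fin 4,
      (∃ r : {i : Fin 4 // i ≠ q}, ¬ (ptransposeAt (rhoTriple (psiMu μ) q) r).PosSemidef) ∧
      ¬ IsSeparableDensity (rhoTriple (psiMu μ) q) := by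
  have hn0 : 0 < Complex.normSq μ := Complex.normSq_pos.2 hμ
  have h6 : Complex.normSq μ < 6 := by
    rcases hdom with h | h
    · have hc2 : Real.sqrt (2/3) ^ 2 = 2/3 := Real.sq_sqrt (by norm_num)
      have habs : Complex.normSq (μ - ((Real.sqrt (2/3) : ℝ) : ℂ)) < 8/3 := by
        rw [← Complex.sq_norm]
        calc (‖μ - ((Real.sqrt (2/3) : ℝ) : ℂ)‖)^2
            < (Real.sqrt (8/3))^2 :=
              pow_lt_pow_left₀ h (norm_nonneg _) (by norm_num)
          _ = 8/3 := Real.sq_sqrt (by norm_num)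
      have hexpand : Complex.normSq (μ - ((Real.sqrt (2/3) : ℝ) : ℂ))
          = (μ.re - Real.sqrt (2/3))^2 + μ.im^2 := by
        simp [Complex.normSq_apply, Complex.sub_re, Complex.sub_im, Complex.ofReal_re,
          Complex.ofReal_im]
        ring
      rw [hexpand] at habs
      have hnμ : Complex.normSq μ = μ.re^2 + μ.im^2 := by
        simp [Complex.normSq_apply]
        ring
      rw [hnμ]
      nlinarith [sq_nonneg (μ.re - 3 * Real.sqrt (2/3)), sq_nonneg μ.im, hc2, habs]
    · rw [h, Complex.normSq_mul]
      simp [Complex.normSq_I, Complex.normSq_ofReal]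
      nlinarith [Real.mul_self_sqrt (by norm_num : (0:ℝ) ≤ 2)]
  have final : ∀ (q : Fin 4) (r s t : {i : Fin 4 // i ≠ q}), r ≠ s → r ≠ t → s ≠ t →
      (∃ r' : {i : Fin 4 // i ≠ q},
        ¬ (ptransposeAt (rhoTriple (psiMu μ) q) r').PosSemidef) ∧
      ¬ IsSeparableDensity (rhoTriple (psiMu μ) q) := by
    intro q r s t h1 h2 h3
    exact ⟨⟨r, key_nppt μ hμ h6 q r s t h1 h2 h3⟩,
      fun hsep => key_nppt μ hμ h6 q r s t h1 h2 h3
        (isSeparable_ptranspose_posSemidef hsep r)⟩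
  intro q
  fin_cases q
  · exact final 0 ⟨1, by decide⟩ ⟨2, by decide⟩ ⟨3, by decide⟩ (by decide) (by decide) (by decide)
  · exact final 1 ⟨0, by decide⟩ ⟨2, by decide⟩ ⟨3, by decide⟩ (by decide) (by decide) (by decide)
  · exact final 2 ⟨0, by decide⟩ ⟨1, by decide⟩ ⟨3, by decide⟩ (by decide) (by decide) (by decide)
  · exact final 3 ⟨0, by decide⟩ ⟨1, by decide⟩ ⟨2, by decide⟩ (by decide) (by decide) (by decide)
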